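/- On a weak almost para-S-manifold, the covariant derivative of each ξ_i satisfies ∇ ξ_i = Q^{-1} f h*_i - f, where h*_i is the g-adjoint of h_i = (1/2) £_{ξ_i} f. -/

import Mathlib

open scoped BigOperators

noncomputable section

variable (C V : Type*) [CommRing C] [Algebra ℝ C] [AddCommGroup V]
  [Module ℝ V] [Module C V] [IsScalarTower ℝ C V]

/-- A metric weak para-f-structure on a manifold, modelled algebraically:
`C` plays the role of the ring of smooth functions, `V` the `C`-module of vector fields
with Lie bracket `b` and derivation action `act` of vector fields on functions,
`g` is a compatible pseudo-Riemannian metric (with `f` of rank `2n`, encoded by `hrank`)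
and `nabla` its Levi-Civita connection (torsion-free and metric). -/
structure MWPF (p : ℕ) where
  f : V →ₗ[C] V
  Q : V →ₗ[C] V
  ξ : Fin p → V
  η : Fin p → V →ₗ[C] C
  g : V →ₗ[C] V →ₗ[C] C
  b : V → V → V
  act : V → C → C
  nabla : V → V → V
  hQbij : Function.Bijective Q
  hf2 : ∀ X, f (f X) = Q X - ∑ i, η i X • ξ i
  hf3 : ∀ X, f (f (f X)) = f (Q X)
  hetaxi : ∀ i j, η i (ξ j) = if i = j then (1 : C) else 0
  hQxi : ∀ i, Q (ξ i) = ξ i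
  hrange : ∀ X : V, X ∈ LinearMap.range f ↔ ∀ i, η i X = 0
  hgsymm : ∀ X Y, g X Y = g Y X
  hgnondeg : ∀ X, (∀ Y, g X Y = 0) → X = 0
  hrank : ∀ Z, (∀ i, η i Z = 0) → (∀ Y, g Z (f Y) = 0) → Z = 0
  hgcompat : ∀ X Y, g (f X) (f Y) = -(g X (Q Y)) + ∑ i, η i X * η i Y
  hbskew : ∀ X Y, b X Y = - b Y X
  hbaddl : ∀ X Y Z, b (X + Y) Z = b X Z + b Y Z
  hjacobi : ∀ X Y Z, b X (b Y Z) + b Y (b Z X) + b Z (b X Y) = 0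
  hactadd : ∀ X a c, act X (a + c) = act X a + act X c
  hactmul : ∀ X a c, act X (a * c) = act X a * c + a * act X c
  hactX : ∀ (a : C) X Y c, act (a • X + Y) c = a * act X c + act Y c
  hbleib : ∀ X (a : C) Y, b X (a • Y) = act X a • Y + a • b X Y
  hnab1 : ∀ (a : C) X X' Y, nabla (a • X + X') Y = a • nabla X Y + nabla X' Y
  hnabadd : ∀ X Y Z, nabla X (Y + Z) = nabla X Y + nabla X Z
  hnableib : ∀ X (a : C) Y, nabla X (a • Y) = act X a • Y + a • nabla X Y
  htors : ∀ X Y, nabla X Y - nabla Y X = b X Y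
  hmetric : ∀ X Y Z, act X (g Y Z) = g (nabla X Y) Z + g Y (nabla X Z)

namespace MWPF

variable {C V} {p : ℕ} (s : MWPF C V p)

/-- The fundamental 2-form `Φ(X,Y) = g(X, fY)`. -/
def Phi (X Y : V) : C := s.g X (s.f Y)

/-- `dη^i(X,Y) = (1/2)(X(η^i Y) - Y(η^i X) - η^i [X,Y])`. -/
def dEta (i : Fin p) (X Y : V) : C :=
  (2⁻¹ : ℝ) • (s.act X (s.η i Y) - s.act Y (s.η i X) - s.η i (s.b X Y))

/-- The Nijenhuis torsion `[f,f]`. -/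
def Nij (X Y : V) : V :=
  s.f (s.f (s.b X Y)) + s.b (s.f X) (s.f Y) - s.f (s.b (s.f X) Y) - s.f (s.b X (s.f Y))

/-- `N^(1)(X,Y) = [f,f](X,Y) - 2 Σ_i dη^i(X,Y) ξ_i`. -/
def N1 (X Y : V) : V := s.Nij X Y - (2 : ℝ) • ∑ i, s.dEta i X Y • s.ξ i

/-- The difference tensor `Q̃ = Q - id`. -/
def Qt (X : V) : V := s.Q X - X

/-- The Lie derivative of `f`: `(£_Z f)X = [Z, fX] - f[Z,X]`. -/
def Lief (Z X : V) : V := s.b Z (s.f X) - s.f (s.b Z X)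

/-- The Lie derivative of `g`: `(£_Z g)(X,Y) = Z(g(X,Y)) - g([Z,X],Y) - g(X,[Z,Y])`. -/
def Lieg (Z X Y : V) : C := s.act Z (s.g X Y) - s.g (s.b Z X) Y - s.g X (s.b Z Y)

/-- `N^(2)_i(X,Y) = (£_{fX} η^i)Y - (£_{fY} η^i)X`. -/
def N2 (i : Fin p) (X Y : V) : C :=
  (s.act (s.f X) (s.η i Y) - s.η i (s.b (s.f X) Y))
    - (s.act (s.f Y) (s.η i X) - s.η i (s.b (s.f Y) X))

/-- The exterior differential of the fundamental 2-form. -/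
def dPhi (X Y Z : V) : C := (3⁻¹ : ℝ) •
  (s.act X (s.Phi Y Z) + s.act Y (s.Phi Z X) + s.act Z (s.Phi X Y)
    - s.Phi (s.b X Y) Z - s.Phi (s.b Z X) Y - s.Phi (s.b Y Z) X)

/-- The tensor `h_i = (1/2) £_{ξ_i} f`. -/
def hmap (i : Fin p) (X : V) : V := (2⁻¹ : ℝ) • s.Lief (s.ξ i) X

/-- The tensor `N^(5)`. -/
def N5 (X Y Z : V) : C :=
  s.act (s.f Z) (s.g X (s.Qt Y)) - s.act (s.f Y) (s.g X (s.Qt Z))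
    + s.g (s.b X (s.f Z)) (s.Qt Y) - s.g (s.b X (s.f Y)) (s.Qt Z)
    + s.g (s.b Y (s.f Z) - s.b Z (s.f Y) - s.f (s.b Y Z)) (s.Qt X)

/-- The curvature tensor of `nabla`. -/
def Rm (X Y Z : V) : V :=
  s.nabla X (s.nabla Y Z) - s.nabla Y (s.nabla X Z) - s.nabla (s.b X Y) Z

end MWPF


/-! ### Auxiliary lemmas -/

private lemma half_add_cancel' {M : Type*} [AddCommGroup M] [Module ℝ M] {c : M}
    (h : c + c = 0) : c = 0 := by
  have h2 : (2 : ℝ) • c = 0 := by rw [two_smul]; exact h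
  calc c = (2⁻¹ : ℝ) • ((2 : ℝ) • c) := by rw [smul_smul]; norm_num
  _ = 0 := by rw [h2, smul_zero]

private lemma double_eq' {M : Type*} [AddCommGroup M] [Module ℝ M] {c d : M}
    (h : c + c = d + d) : c = d := by
  have h0 : (c - d) + (c - d) = 0 := by
    rw [show (c - d) + (c - d) = (c + c) - (d + d) from by abel, h, sub_self]
  exact sub_eq_zero.mp (half_add_cancel' h0)

namespace MWPF

variable {C V} {p : ℕ} (s : MWPF C V p)

lemma act_zero (X : V) : s.act X 0 = 0 := by
  have h := s.hactadd X 0 0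
  simp only [add_zero] at h
  linear_combination -h

lemma act_one (X : V) : s.act X 1 = 0 := by
  have h := s.hactmul X 1 1
  simp only [mul_one, one_mul] at h
  linear_combination -h

lemma act_neg (X : V) (a : C) : s.act X (-a) = -s.act X a := by
  have h := s.hactadd X a (-a)
  rw [add_neg_cancel, s.act_zero] at h
  linear_combination -h

lemma act_sub (X : V) (a c : C) : s.act X (a - c) = s.act X a - s.act X c := by
  rw [sub_eq_add_neg, s.hactadd, s.act_neg, ← sub_eq_add_neg]

lemma b_add₂ (X A B : V) : s.b X (A + B) = s.b X A + s.b X B := by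
  rw [s.hbskew X (A + B), s.hbaddl, s.hbskew A X, s.hbskew B X]
  abel

lemma b_zero₂ (X : V) : s.b X 0 = 0 := by
  have h := s.b_add₂ X 0 0
  simp only [add_zero] at h
  have h2 : s.b X 0 + 0 = s.b X 0 + s.b X 0 := by rw [add_zero]; exact h
  exact (add_left_cancel h2).symm

lemma b_neg₂ (X A : V) : s.b X (-A) = -s.b X A := by
  apply eq_neg_of_add_eq_zero_left
  rw [← s.b_add₂]
  simp [s.b_zero₂]

lemma jacobi' (A B Z : V) :
    s.b A (s.b B Z) - s.b B (s.b A Z) = s.b (s.b A B) Z := by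
  have h := s.hjacobi A B Z
  rw [s.hbskew Z A, s.b_neg₂, s.hbskew Z (s.b A B)] at h
  have h2 : s.b A (s.b B Z) - s.b B (s.b A Z) - s.b (s.b A B) Z = 0 := by
    rw [← h]; abel
  exact sub_eq_zero.mp h2

lemma act_comm (i : Fin p) (X Y : V) (c : C) :
    s.act X (s.act Y c) - s.act Y (s.act X c) = s.act (s.b X Y) c := by
  have J := congrArg (s.η i) (s.hjacobi X Y (c • s.ξ i))
  rw [s.hbleib Y c (s.ξ i), s.hbskew (c • s.ξ i) X, s.hbleib X c (s.ξ i),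
      s.hbskew (c • s.ξ i) (s.b X Y), s.hbleib (s.b X Y) c (s.ξ i),
      s.b_add₂ X, s.hbleib X (s.act Y c) (s.ξ i), s.hbleib X c (s.b Y (s.ξ i)),
      s.b_neg₂ Y, s.b_add₂ Y, s.hbleib Y (s.act X c) (s.ξ i),
      s.hbleib Y c (s.b X (s.ξ i))] at J
  have hj := congrArg (s.η i) (s.jacobi' X Y (s.ξ i))
  simp only [map_add, map_neg, map_sub, map_smul, map_zero, smul_eq_mul,
    s.hetaxi, if_pos rfl, if_true, eq_self_iff_true, mul_one] at J hj
  linear_combination J - c * hj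

section WithS

variable (hS : ∀ (i : Fin p) (X Y : V), s.dEta i X Y = s.Phi X Y)

include hS

lemma two_phi (i : Fin p) (A B : V) :
    s.Phi A B + s.Phi A B
      = s.act A (s.η i B) - s.act B (s.η i A) - s.η i (s.b A B) := by
  rw [← hS i A B]
  simp only [MWPF.dEta]
  rw [← add_smul]
  norm_num

lemma phi_skew (i : Fin p) (A B : V) : s.g A (s.f B) = -(s.g (s.f A) B) := by
  have h : s.Phi A B = -s.Phi B A := by
    apply double_eq'
    have h1 := s.two_phi hS i A B
    have h2 := s.two_phi hS i B A
    have hb : s.η i (s.b B A) = -s.η i (s.b A B) := by rw [s.hbskew B A, map_neg]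
    linear_combination h1 + h2 - hb
  simp only [MWPF.Phi] at h
  rw [h, s.hgsymm B (s.f A)]

end WithS

lemma Q_selfadj (A B : V) : s.g (s.Q A) B = s.g A (s.Q B) := by
  have h1 := s.hgcompat A B
  have h2 := s.hgcompat B A
  have h3 := s.hgsymm (s.f A) (s.f B)
  have h4 := s.hgsymm (s.Q A) B
  have h5 : (∑ j, s.η j A * s.η j B) = ∑ j, s.η j B * s.η j A := by
    apply Finset.sum_congr rfl; intros; ring
  linear_combination h4 + h2 - h1 + h3 - h5

lemma sum_eta_xi (j : Fin p) : (∑ k, s.η k (s.ξ j) • s.ξ k) = s.ξ j := by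
  rw [Finset.sum_eq_single j]
  · rw [s.hetaxi, if_pos rfl, one_smul]
  · intro k _ hk; rw [s.hetaxi, if_neg hk, zero_smul]
  · intro h; exact absurd (Finset.mem_univ j) h

lemma ffxi (j : Fin p) : s.f (s.f (s.ξ j)) = 0 := by
  rw [s.hf2, s.hQxi, s.sum_eta_xi]
  exact sub_self _

lemma eta_f_zero (j : Fin p) (Y : V) : s.η j (s.f Y) = 0 :=
  (s.hrange (s.f Y)).mp ⟨Y, rfl⟩ j

section WithS2

variable (hS : ∀ (i : Fin p) (X Y : V), s.dEta i X Y = s.Phi X Y)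

include hS

lemma eta_g (i : Fin p) (j : Fin p) (Y : V) : s.g (s.ξ j) Y = s.η j Y := by
  have h0 : s.g (s.f (s.ξ j)) (s.f Y) = 0 := by
    have hsk := s.phi_skew hS i (s.f (s.ξ j)) Y
    rw [s.ffxi j] at hsk
    simpa using hsk
  have h1 := s.hgcompat (s.ξ j) Y
  have h2 : (∑ k, s.η k (s.ξ j) * s.η k Y) = s.η j Y := by
    rw [Finset.sum_eq_single j]
    · rw [s.hetaxi, if_pos rfl, one_mul]
    · intro k _ hk; rw [s.hetaxi, if_neg hk, zero_mul]
    · intro h; exact absurd (Finset.mem_univ j) h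
  have h3 : s.g (s.ξ j) (s.Q Y) = s.η j Y := by linear_combination h1 - h0 + h2
  calc s.g (s.ξ j) Y = s.g (s.Q (s.ξ j)) Y := by rw [s.hQxi]
  _ = s.g (s.ξ j) (s.Q Y) := s.Q_selfadj _ _
  _ = s.η j Y := h3

lemma lie_eta (i : Fin p) (j k : Fin p) (Y : V) :
    s.act (s.ξ j) (s.η k Y) = s.η k (s.b (s.ξ j) Y) := by
  have h := s.two_phi hS k (s.ξ j) Y
  have hp : s.Phi (s.ξ j) Y = 0 := by
    simp only [MWPF.Phi]
    rw [s.eta_g hS i j (s.f Y), s.eta_f_zero]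
  have hc : s.act Y (s.η k (s.ξ j)) = 0 := by
    rw [s.hetaxi]
    by_cases hkj : k = j
    · rw [if_pos hkj, s.act_one]
    · rw [if_neg hkj, s.act_zero]
  linear_combination -h + 2 * hp + hc

lemma b_xi_xi (i : Fin p) (j : Fin p) : s.b (s.ξ i) (s.ξ j) = 0 := by
  have heta : ∀ k, s.η k (s.b (s.ξ i) (s.ξ j)) = 0 := by
    intro k
    have hl := s.lie_eta hS i i k (s.ξ j)
    rw [s.hetaxi] at hl
    by_cases h : k = j
    · rw [if_pos h] at hl; rw [← hl, s.act_one]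
    · rw [if_neg h] at hl; rw [← hl, s.act_zero]
  apply s.hrank
  · exact heta
  · intro Z
    apply half_add_cancel'
    have h2 := s.two_phi hS i (s.b (s.ξ i) (s.ξ j)) Z
    have hz : s.act Z (s.η i (s.b (s.ξ i) (s.ξ j))) = 0 := by
      rw [heta i, s.act_zero]
    have hc := s.act_comm i (s.ξ i) (s.ξ j) (s.η i Z)
    have l1 := s.lie_eta hS i j i Z
    have l2 := s.lie_eta hS i i i Z
    have l3 := congrArg (s.act (s.ξ i)) l1
    have l4 := congrArg (s.act (s.ξ j)) l2
    have l5 := s.lie_eta hS i i i (s.b (s.ξ j) Z)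
    have l6 := s.lie_eta hS i j i (s.b (s.ξ i) Z)
    have hj := congrArg (s.η i) (s.jacobi' (s.ξ i) (s.ξ j) Z)
    rw [map_sub] at hj
    simp only [MWPF.Phi] at h2
    linear_combination h2 - hc + l3 + l5 - l4 - l6 + hj - hz

lemma lie_phi (i : Fin p) (A B : V) :
    s.act (s.ξ i) (s.Phi A B)
      = s.Phi (s.b (s.ξ i) A) B + s.Phi A (s.b (s.ξ i) B) := by
  apply double_eq'
  have h1 := s.two_phi hS i A B
  have h2 := s.two_phi hS i (s.b (s.ξ i) A) B
  have h3 := s.two_phi hS i A (s.b (s.ξ i) B)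
  have c1 := s.act_comm i (s.ξ i) A (s.η i B)
  have c2 := s.act_comm i (s.ξ i) B (s.η i A)
  have l1 := congrArg (s.act A) (s.lie_eta hS i i i B)
  have l2 := congrArg (s.act B) (s.lie_eta hS i i i A)
  have l3 := s.lie_eta hS i i i (s.b A B)
  have hj := congrArg (s.η i) (s.jacobi' (s.ξ i) A B)
  rw [map_sub] at hj
  have hA1 : s.act (s.ξ i) (s.Phi A B) + s.act (s.ξ i) (s.Phi A B)
      = s.act (s.ξ i) (s.act A (s.η i B)) - s.act (s.ξ i) (s.act B (s.η i A))
        - s.act (s.ξ i) (s.η i (s.b A B)) := by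
    rw [← s.hactadd, h1, s.act_sub, s.act_sub]
  linear_combination hA1 + c1 + l1 - c2 - l2 - l3 - hj - h2 - h3

end WithS2

lemma lieg_eq (i : Fin p) (X Z : V) :
    s.Lieg (s.ξ i) X Z
      = s.g (s.nabla X (s.ξ i)) Z + s.g (s.nabla Z (s.ξ i)) X := by
  have hm := s.hmetric (s.ξ i) X Z
  have t1 := congrArg (fun W => s.g W Z) (s.htors (s.ξ i) X)
  have t2 := congrArg (fun W => s.g X W) (s.htors (s.ξ i) Z)
  simp only [map_sub, LinearMap.sub_apply] at t1 t2
  have hsy := s.hgsymm X (s.nabla Z (s.ξ i))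
  simp only [MWPF.Lieg]
  linear_combination hm + t1 + t2 + hsy

section WithS3

variable (hS : ∀ (i : Fin p) (X Y : V), s.dEta i X Y = s.Phi X Y)

include hS

lemma keyB (i : Fin p) (X Z : V) :
    s.g (s.nabla X (s.ξ i)) Z - s.g (s.nabla Z (s.ξ i)) X
      = s.Phi X Z + s.Phi X Z := by
  have h := s.two_phi hS i X Z
  have a1 : s.act X (s.η i Z)
      = s.g (s.nabla X (s.ξ i)) Z + s.g (s.ξ i) (s.nabla X Z) := by
    rw [← s.eta_g hS i i Z]; exact s.hmetric X (s.ξ i) Z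
  have a2 : s.act Z (s.η i X)
      = s.g (s.nabla Z (s.ξ i)) X + s.g (s.ξ i) (s.nabla Z X) := by
    rw [← s.eta_g hS i i X]; exact s.hmetric Z (s.ξ i) X
  have a3 : s.η i (s.b X Z)
      = s.g (s.ξ i) (s.nabla X Z) - s.g (s.ξ i) (s.nabla Z X) := by
    rw [← s.eta_g hS i i (s.b X Z), ← s.htors X Z, map_sub]
  linear_combination -h - a1 + a2 + a3

lemma keyC (i : Fin p) (X Y : V) :
    s.Lieg (s.ξ i) X (s.f (s.f Y))
      = s.g X (s.f (s.b (s.ξ i) (s.f Y)))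
        - s.g X (s.b (s.ξ i) (s.f (s.f Y))) := by
  have L := s.lie_phi hS i X (s.f Y)
  simp only [MWPF.Phi] at L
  simp only [MWPF.Lieg]
  linear_combination L

lemma keyD (i : Fin p) (X : V) (j : Fin p) (c : C) :
    s.Lieg (s.ξ i) X (c • s.ξ j) = 0 := by
  simp only [MWPF.Lieg]
  rw [s.hbleib (s.ξ i) c (s.ξ j), s.b_xi_xi hS i j]
  have e5 : s.g X (s.ξ j) = s.η j X := by
    rw [s.hgsymm]; exact s.eta_g hS i j X
  have e6 : s.g (s.b (s.ξ i) X) (s.ξ j) = s.η j (s.b (s.ξ i) X) := by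
    rw [s.hgsymm]; exact s.eta_g hS i j _
  simp only [smul_zero, add_zero, map_smul, smul_eq_mul]
  rw [e5, e6]
  have e2 := s.hactmul (s.ξ i) c (s.η j X)
  have e7 := s.lie_eta hS i i j X
  linear_combination e2 + c * e7

end WithS3

lemma lieg_add (Z X W1 W2 : V) :
    s.Lieg Z X (W1 + W2) = s.Lieg Z X W1 + s.Lieg Z X W2 := by
  simp only [MWPF.Lieg, map_add, s.b_add₂, s.hactadd]
  ring

lemma lieg_zero (Z X : V) : s.Lieg Z X 0 = 0 := by
  simp only [MWPF.Lieg, map_zero, s.b_zero₂, s.act_zero]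
  ring

section WithS4

variable (hS : ∀ (i : Fin p) (X Y : V), s.dEta i X Y = s.Phi X Y)

include hS

lemma lieg_sum (i : Fin p) (X Y : V) :
    s.Lieg (s.ξ i) X (∑ j, s.η j Y • s.ξ j) = 0 := by
  have key : ∀ (t : Finset (Fin p)),
      s.Lieg (s.ξ i) X (∑ j ∈ t, s.η j Y • s.ξ j) = 0 := by
    intro t
    induction t using Finset.induction_on with
    | empty => simpa using s.lieg_zero (s.ξ i) X
    | insert _ _ h ih =>
      rw [Finset.sum_insert h, s.lieg_add, s.keyD hS i X, zero_add, ih]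
  exact key Finset.univ

lemma lieg_Q (i : Fin p) (X Y : V) :
    s.Lieg (s.ξ i) X (s.Q Y) = s.Lieg (s.ξ i) X (s.f (s.f Y)) := by
  have hdecomp : s.Q Y = s.f (s.f Y) + ∑ j, s.η j Y • s.ξ j := by
    rw [s.hf2 Y]; abel
  rw [hdecomp, s.lieg_add, s.lieg_sum hS i X Y, add_zero]

end WithS4

lemma g_hmap_two (i : Fin p) (X W : V) :
    s.g X (s.hmap i W) + s.g X (s.hmap i W) = s.g X (s.Lief (s.ξ i) W) := by
  rw [← map_add]
  congr 1
  simp only [MWPF.hmap]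
  rw [← add_smul]
  norm_num

end MWPF

/-- on a weak almost para-S-manifold, `∇ ξ_i = Q⁻¹ f h*_i - f`,
where `h*_i` is the `g`-adjoint of `h_i = (1/2) £_{ξ_i} f`; equivalently (applying the
invertible `Q`): `Q(∇_X ξ_i) + Q(fX) = f(h*_i X)` for all `X`. -/
theorem paraS_nabla_xi {C V : Type*} [CommRing C] [Algebra ℝ C] [AddCommGroup V]
    [Module ℝ V] [Module C V] [IsScalarTower ℝ C V] {p : ℕ} (s : MWPF C V p)
    (hS : ∀ (i : Fin p) (X Y : V), s.dEta i X Y = s.Phi X Y)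
    (i : Fin p) (hstar : V → V)
    (hadj : ∀ X Y, s.g (hstar X) Y = s.g X (s.hmap i Y)) :
    ∀ X : V, s.Q (s.nabla X (s.ξ i)) + s.Q (s.f X) = s.f (hstar X) := by
  intro X
  rw [← sub_eq_zero]
  apply s.hgnondeg
  intro Y
  simp only [map_add, map_sub, LinearMap.add_apply, LinearMap.sub_apply]
  apply half_add_cancel'
  have q1 := s.Q_selfadj (s.nabla X (s.ξ i)) Y
  have q2 := s.Q_selfadj (s.f X) Y
  have kA := s.lieg_eq i X (s.Q Y)
  have kB := s.keyB hS i X (s.Q Y)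
  have kQ := s.lieg_Q hS i X Y
  have kC := s.keyC hS i X Y
  have hg2 := s.g_hmap_two i X (s.f Y)
  have glief : s.g X (s.Lief (s.ξ i) (s.f Y))
      = s.g X (s.b (s.ξ i) (s.f (s.f Y))) - s.g X (s.f (s.b (s.ξ i) (s.f Y))) := by
    simp only [MWPF.Lief]
    rw [map_sub]
  have sp : s.Phi X (s.Q Y) = -(s.g (s.f X) (s.Q Y)) := by
    simp only [MWPF.Phi]
    exact s.phi_skew hS i X (s.Q Y)
  have sk2 : s.g (s.f (hstar X)) Y = -(s.g (hstar X) (s.f Y)) := by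
    have h := s.phi_skew hS i (hstar X) Y
    linear_combination h
  have ha := hadj X (s.f Y)
  linear_combination 2 * q1 + kB - kA + kQ + kC + 2 * sp + 2 * q2 - 2 * sk2
    + 2 * ha + hg2 + glief
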